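/- For the configuration A_n(m), the identity ∑_{α ≠ β, α,β ∈ A} m_α m_β (α,β)/((α,x)(β,x)) ≡ 0 holds as a rational function identity, where A consists of eᵢ - eⱼ (i < j ≤ n) with multiplicity m and eᵢ - √m e_{n+1} (i ≤ n) with multiplicity 1. -/

import Mathlib

/-- The dot product on `Fin N → ℝ`. -/
def dot {N : ℕ} (a b : Fin N → ℝ) : ℝ := ∑ i, a i * b i

/-- Index set for the configuration `A_n(m)`: pairs `i < j` (vectors `eᵢ - eⱼ`) and
indices `i` (vectors `eᵢ - √m·e_{n+1}`). -/
abbrev AnmIdx (n : ℕ) := {p : Fin n × Fin n // p.1 < p.2} ⊕ Fin n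

/-- The vectors of the configuration `A_n(m)`. -/
noncomputable def AnmVec (n : ℕ) (m : ℝ) : AnmIdx n → (Fin (n + 1) → ℝ)
  | .inl p => fun k => if k = p.1.1.castSucc then 1 else if k = p.1.2.castSucc then -1 else 0
  | .inr i => fun k => if k = i.castSucc then 1 else if k = Fin.last n then -(Real.sqrt m) else 0

/-- The multiplicities of the configuration `A_n(m)`. -/
def AnmMult (n : ℕ) (m : ℝ) : AnmIdx n → ℝ
  | .inl _ => m
  | .inr _ => 1



/-- Sum over the subtype of increasing pairs as a double sum. -/
lemma sum_pairs_eq {n : ℕ} (g : Fin n → Fin n → ℝ) :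
    ∑ p : {p : Fin n × Fin n // p.1 < p.2}, g p.1.1 p.1.2 =
      ∑ i : Fin n, ∑ j : Fin n, if i < j then g i j else 0 := by
  rw [← Finset.subtype_univ,
    Finset.sum_subtype_eq_sum_filter (fun p : Fin n × Fin n => g p.1 p.2)
      (p := fun p : Fin n × Fin n => p.1 < p.2),
    Finset.sum_filter, Fintype.sum_prod_type]

/-- A symmetric sum over ordered distinct pairs as twice a sum over increasing pairs. -/
lemma sum_ne_eq_two_mul {n : ℕ} (g : Fin n → Fin n → ℝ) (hg : ∀ i j, g i j = g j i) :
    ∑ i : Fin n, ∑ j : Fin n, (if i ≠ j then g i j else 0) =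
      2 * ∑ p : {p : Fin n × Fin n // p.1 < p.2}, g p.1.1 p.1.2 := by
  rw [sum_pairs_eq]
  have key : ∀ i j : Fin n, (if i ≠ j then g i j else 0) =
      (if i < j then g i j else 0) + (if j < i then g i j else 0) := by
    intro i j
    rcases lt_trichotomy i j with h | h | h
    · simp [h, h.ne, h.not_gt, h.le.not_gt]
    · simp [h]
    · simp [h, h.ne', h.not_gt, h.le.not_gt]
  simp_rw [key, Finset.sum_add_distrib]
  have : ∑ i : Fin n, ∑ j : Fin n, (if j < i then g i j else 0) =
      ∑ i : Fin n, ∑ j : Fin n, (if i < j then g i j else 0) := by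
    rw [Finset.sum_comm]
    exact Finset.sum_congr rfl fun i _ => Finset.sum_congr rfl fun j _ => by
      rw [hg]
  rw [this]; try ring

/-- Cancellation of the sum over distinct triples of 1/((Xk-Xj)(Xk-Xl)). -/
lemma triple_cancel {n : ℕ} (X : Fin n → ℝ) (hX : ∀ i j : Fin n, i ≠ j → X i - X j ≠ 0) :
    ∑ k : Fin n, ∑ j : Fin n, ∑ l : Fin n,
      (if j ≠ k ∧ l ≠ k ∧ l ≠ j then 1 / ((X k - X j) * (X k - X l)) else 0) = 0 := by
  set F : Fin n → Fin n → Fin n → ℝ := fun k j l =>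
    if j ≠ k ∧ l ≠ k ∧ l ≠ j then 1 / ((X k - X j) * (X k - X l)) else 0 with hF
  have hsplit : ∀ k j l : Fin n, F k j l = -(F j k l) - F l k j := by
    intro k j l
    by_cases h : j ≠ k ∧ l ≠ k ∧ l ≠ j
    · obtain ⟨h1, h2, h3⟩ := h
      simp only [hF]
      rw [if_pos ⟨h1, h2, h3⟩, if_pos ⟨h1.symm, h3, h2⟩, if_pos ⟨h2.symm, h3.symm, h1⟩]
      have d1 := hX k j h1.symm
      have d2 := hX k l h2.symm
      have d3 := hX j l h3.symm
      have d4 := hX j k h1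
      have d5 := hX l k h2
      have d6 := hX l j h3
      field_simp
      ring
    · simp only [hF]
      rw [if_neg h, if_neg (fun hc => h ⟨hc.1.symm, hc.2.2, hc.2.1⟩),
        if_neg (fun hc => h ⟨hc.2.2, hc.1.symm, hc.2.1.symm⟩)]
      ring
  have h1 : (∑ k : Fin n, ∑ j : Fin n, ∑ l : Fin n, F j k l) =
      ∑ k : Fin n, ∑ j : Fin n, ∑ l : Fin n, F k j l := Finset.sum_comm
  have h2 : (∑ k : Fin n, ∑ j : Fin n, ∑ l : Fin n, F l k j) =
      ∑ k : Fin n, ∑ j : Fin n, ∑ l : Fin n, F j k l :=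
    Finset.sum_congr rfl fun k _ => Finset.sum_comm
  have key : (∑ k : Fin n, ∑ j : Fin n, ∑ l : Fin n, F k j l) =
      -(∑ k : Fin n, ∑ j : Fin n, ∑ l : Fin n, F k j l)
      - (∑ k : Fin n, ∑ j : Fin n, ∑ l : Fin n, F k j l) := by
    have e : (∑ k : Fin n, ∑ j : Fin n, ∑ l : Fin n, F k j l) =
        ∑ k : Fin n, ∑ j : Fin n, ∑ l : Fin n, (-(F j k l) - F l k j) :=
      Finset.sum_congr rfl fun k _ => Finset.sum_congr rfl fun j _ =>
        Finset.sum_congr rfl fun l _ => hsplit k j l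
    have eA : (∑ k : Fin n, ∑ j : Fin n, ∑ l : Fin n, (-(F j k l) - F l k j)) =
        -(∑ k : Fin n, ∑ j : Fin n, ∑ l : Fin n, F j k l)
          - ∑ k : Fin n, ∑ j : Fin n, ∑ l : Fin n, F l k j := by
      simp_rw [Finset.sum_sub_distrib, Finset.sum_neg_distrib]
    conv_lhs => rw [e, eA, h1, h2, h1]
  have : ∑ k : Fin n, ∑ j : Fin n, ∑ l : Fin n, F k j l = 0 := by linarith
  exact this

lemma ind_mul_ind_sum {n : ℕ} (a b : Fin n) :
    ∑ k : Fin n, (if a = k then (1:ℝ) else 0) * (if b = k then (1:ℝ) else 0) =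
      (if a = b then (1:ℝ) else 0) := by
  rcases eq_or_ne a b with h | h
  · subst h; simp [ite_mul]
  · rw [if_neg h]
    apply Finset.sum_eq_zero
    intro k _
    rcases eq_or_ne a k with rfl | h1
    · simp [Ne.symm h]
    · rw [if_neg h1]; simp

lemma ite_sum_pull {β : Type*} [Fintype β] (P : Prop) [Decidable P] (c : β → ℝ) :
    ∑ j : β, (if P then c j else 0) = if P then ∑ j : β, c j else 0 := by
  split_ifs <;> simp

/-- The "field" of the A_{n-1} part. -/
lemma W_eq {n : ℕ} (X : Fin n → ℝ) (k : Fin n) :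
    ∑ p : {p : Fin n × Fin n // p.1 < p.2},
        ((if p.1.1 = k then (1:ℝ) else 0) - (if p.1.2 = k then 1 else 0)) / (X p.1.1 - X p.1.2)
      = ∑ j : Fin n, if j ≠ k then 1 / (X k - X j) else 0 := by
  rw [sum_pairs_eq (fun i j => ((if i = k then (1:ℝ) else 0) - (if j = k then 1 else 0)) /
    (X i - X j))]
  have split1 : ∀ i j : Fin n,
      (if i < j then ((if i = k then (1:ℝ) else 0) - (if j = k then 1 else 0)) / (X i - X j)
        else 0)
      = (if i = k then (if i < j then 1 / (X i - X j) else 0) else 0)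
        - (if j = k then (if i < j then 1 / (X i - X j) else 0) else 0) := by
    intro i j
    by_cases hik : i = k <;> by_cases hjk : j = k <;> by_cases hij : i < j <;>
      simp [hik, hjk, hij] <;> (try ring) <;> (split_ifs <;> ring)
  simp_rw [split1, Finset.sum_sub_distrib]
  have e1 : ∑ i : Fin n, ∑ j : Fin n,
      (if i = k then (if i < j then 1 / (X i - X j) else 0) else 0)
      = ∑ j : Fin n, if k < j then 1 / (X k - X j) else 0 := by
    simp_rw [ite_sum_pull]
    rw [Finset.sum_ite_eq' Finset.univ k
      (fun i => ∑ j : Fin n, (if i < j then 1 / (X i - X j) else 0))]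
    simp
  have e2 : ∑ i : Fin n, ∑ j : Fin n,
      (if j = k then (if i < j then 1 / (X i - X j) else 0) else 0)
      = ∑ i : Fin n, if i < k then 1 / (X i - X k) else 0 := by
    apply Finset.sum_congr rfl
    intro i _
    rw [Finset.sum_ite_eq' Finset.univ k (fun j => (if i < j then 1 / (X i - X j) else 0))]
    simp
  rw [e1, e2]
  rw [← Finset.sum_sub_distrib]
  apply Finset.sum_congr rfl
  intro j _
  rcases lt_trichotomy j k with h | h | h
  · rw [if_neg h.not_gt, if_pos h, if_pos h.ne, zero_sub]
    rw [show X j - X k = -(X k - X j) by ring, div_neg, neg_neg]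
  · subst h; simp
  · rw [if_pos h, if_neg h.not_gt, if_pos h.ne', sub_zero]

lemma Sll_zero {n : ℕ} (X : Fin n → ℝ) (hX : ∀ i j : Fin n, i ≠ j → X i - X j ≠ 0) :
    ∑ p : {p : Fin n × Fin n // p.1 < p.2}, ∑ q : {p : Fin n × Fin n // p.1 < p.2},
      (if p ≠ q then
        (((if p.1.1 = q.1.1 then (1:ℝ) else 0) - (if p.1.1 = q.1.2 then 1 else 0))
          - ((if p.1.2 = q.1.1 then (1:ℝ) else 0) - (if p.1.2 = q.1.2 then 1 else 0))) /
        ((X p.1.1 - X p.1.2) * (X q.1.1 - X q.1.2))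
      else 0) = 0 := by
  classical
  set P := {p : Fin n × Fin n // p.1 < p.2}
  set d : P → ℝ := fun p => X p.1.1 - X p.1.2 with hd
  set a : P → Fin n → ℝ :=
    fun p k => (if p.1.1 = k then (1:ℝ) else 0) - (if p.1.2 = k then 1 else 0) with ha
  set f : P → P → ℝ := fun p q =>
    (((if p.1.1 = q.1.1 then (1:ℝ) else 0) - (if p.1.1 = q.1.2 then 1 else 0))
      - ((if p.1.2 = q.1.1 then (1:ℝ) else 0) - (if p.1.2 = q.1.2 then 1 else 0))) /
      (d p * d q) with hf
  -- Step 1: remove the diagonal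
  have step1 : ∀ p q : P, (if p ≠ q then f p q else 0) = f p q - (if p = q then f p q else 0) := by
    intro p q
    by_cases h : p = q <;> simp [h]
  have diag : ∀ p : P, (∑ q : P, if p = q then f p q else 0) = 2 / (d p * d p) := by
    intro p
    rw [Finset.sum_ite_eq Finset.univ p (fun q => f p q)]
    simp only [Finset.mem_univ, if_pos]
    have hne : p.1.1 ≠ p.1.2 := p.2.ne
    rw [hf]
    simp only [if_pos rfl, if_neg hne, if_neg (Ne.symm hne)]
    norm_num
  -- Step 2: the numerator as a sum over coordinates
  have hnum : ∀ p q : P, f p q = ∑ k : Fin n, (a p k / d p) * (a q k / d q) := by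
    intro p q
    simp_rw [div_mul_div_comm, ← Finset.sum_div]
    rw [hf]
    congr 1
    rw [ha]
    simp only
    simp_rw [sub_mul, mul_sub, Finset.sum_sub_distrib, ind_mul_ind_sum]
  -- Step 3: the full double sum as a sum of squares
  have step3 : (∑ p : P, ∑ q : P, f p q) =
      ∑ k : Fin n, (∑ p : P, a p k / d p) * (∑ q : P, a q k / d q) := by
    simp_rw [hnum]
    have e1 : ∀ p : P, (∑ q : P, ∑ k : Fin n, (a p k / d p) * (a q k / d q)) =
        ∑ k : Fin n, (a p k / d p) * (∑ q : P, a q k / d q) := by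
      intro p
      rw [Finset.sum_comm]
      exact Finset.sum_congr rfl fun k _ => (Finset.mul_sum _ _ _).symm
    simp_rw [e1]
    rw [Finset.sum_comm]
    exact Finset.sum_congr rfl fun k _ => (Finset.sum_mul _ _ _).symm
  -- Step 4: identify the field with t k
  have step4 : ∀ k : Fin n, (∑ p : P, a p k / d p) =
      ∑ j : Fin n, if j ≠ k then 1 / (X k - X j) else 0 := by
    intro k
    rw [← W_eq X k]
  -- Step 5: sum of squares equals diagonal part
  have step5 : (∑ k : Fin n, (∑ j : Fin n, if j ≠ k then 1 / (X k - X j) else 0) *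
      (∑ j : Fin n, if j ≠ k then 1 / (X k - X j) else 0)) =
      ∑ k : Fin n, ∑ j : Fin n, (if j ≠ k then 1 / ((X k - X j) * (X k - X j)) else 0) := by
    have expand : ∀ k : Fin n, (∑ j : Fin n, if j ≠ k then 1 / (X k - X j) else 0) *
        (∑ j : Fin n, if j ≠ k then 1 / (X k - X j) else 0) =
        ∑ j : Fin n, ∑ l : Fin n,
          ((if j ≠ k ∧ l ≠ k ∧ l ≠ j then 1 / ((X k - X j) * (X k - X l)) else 0)
            + (if l = j then (if j ≠ k then 1 / ((X k - X j) * (X k - X j)) else 0) else 0)) := by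
      intro k
      rw [Finset.sum_mul_sum]
      apply Finset.sum_congr rfl; intro j _
      apply Finset.sum_congr rfl; intro l _
      by_cases hjk : j ≠ k <;> by_cases hlk : l ≠ k <;> by_cases hlj : l = j <;>
        simp [hjk, hlk, hlj, div_mul_div_comm] <;> simp_all <;> ring
    simp_rw [expand, Finset.sum_add_distrib]
    rw [triple_cancel X hX, zero_add]
    apply Finset.sum_congr rfl; intro k _
    apply Finset.sum_congr rfl; intro j _
    rw [Finset.sum_ite_eq' Finset.univ j
      (fun l => (if j ≠ k then 1 / ((X k - X j) * (X k - X j)) else 0))]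
    simp
  -- Step 6: diagonal part equals twice the pair sum
  have step6 : (∑ k : Fin n, ∑ j : Fin n, (if j ≠ k then 1 / ((X k - X j) * (X k - X j)) else 0))
      = 2 * ∑ p : P, 1 / (d p * d p) := by
    have cond : ∀ k j : Fin n, (if j ≠ k then 1 / ((X k - X j) * (X k - X j)) else 0)
        = (if k ≠ j then 1 / ((X k - X j) * (X k - X j)) else 0) := by
      intro k j
      exact if_congr ne_comm rfl rfl
    simp_rw [cond]
    have hg : ∀ i j : Fin n, (fun k j => 1 / ((X k - X j) * (X k - X j))) i j
        = (fun k j => 1 / ((X k - X j) * (X k - X j))) j i := by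
      intro i j
      show 1 / ((X i - X j) * (X i - X j)) = 1 / ((X j - X i) * (X j - X i))
      rw [show (X j - X i) * (X j - X i) = (X i - X j) * (X i - X j) by ring]
    rw [sum_ne_eq_two_mul (fun k j => 1 / ((X k - X j) * (X k - X j))) hg]
  -- Put everything together
  change ∑ p : P, ∑ q : P, (if p ≠ q then f p q else 0) = 0
  simp_rw [step1, Finset.sum_sub_distrib, diag]
  rw [step3]
  simp_rw [step4]
  rw [step5, step6]
  have : ∀ p : P, (2:ℝ) / (d p * d p) = 2 * (1 / (d p * d p)) := fun p => by ring
  simp_rw [this, ← Finset.mul_sum]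
  ring


lemma dot_two {N : ℕ} {i j : Fin N} (h : i ≠ j) (c e : ℝ) (b : Fin N → ℝ) :
    dot (fun k => if k = i then c else if k = j then e else 0) b = c * b i + e * b j := by
  unfold dot
  rw [Finset.sum_eq_add_of_mem i j (Finset.mem_univ _) (Finset.mem_univ _) h]
  · simp [h.symm]
  · intro k _ hk
    simp [hk.1, hk.2]

lemma two_ind {α : Type*} [DecidableEq α] {a b : α} (h : a ≠ b) (c : α) (e : ℝ) :
    (if c = a then (1:ℝ) else if c = b then e else 0)
      = (if c = a then (1:ℝ) else 0) + e * (if c = b then 1 else 0) := by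
  split_ifs with h1 h2 <;> simp_all

lemma one_ind {α : Type*} [DecidableEq α] {a b c : α} (h : c ≠ b) (e : ℝ) :
    (if c = a then (1:ℝ) else if c = b then e else 0) = (if c = a then (1:ℝ) else 0) := by
  split_ifs <;> simp_all

/-- The identity `∑_{α ≠ β} m_α m_β (α,β)/((α,x)(β,x)) = 0` for the configuration `A_n(m)`. -/
theorem Anm_sum_identity (n : ℕ) (m : ℝ) (hm : 0 < m) (x : Fin (n + 1) → ℝ)
    (hx : ∀ a : AnmIdx n, dot (AnmVec n m a) x ≠ 0) :
    ∑ a : AnmIdx n, ∑ b : AnmIdx n,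
      (if a ≠ b then
        AnmMult n m a * AnmMult n m b * dot (AnmVec n m a) (AnmVec n m b) /
          (dot (AnmVec n m a) x * dot (AnmVec n m b) x)
      else 0) = 0 := by
  classical
  have hss : Real.sqrt m * Real.sqrt m = m := Real.mul_self_sqrt hm.le
  set s := Real.sqrt m with hs_def
  set X : Fin n → ℝ := fun i => x i.castSucc with hX_def
  set y : Fin n → ℝ := fun i => x i.castSucc - s * x (Fin.last n) with hy_def
  have hcs_ne : ∀ i : Fin n, i.castSucc ≠ Fin.last n := fun i => (Fin.castSucc_lt_last i).ne
  have hcs_inj : ∀ i j : Fin n, (i.castSucc = j.castSucc) = (i = j) := by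
    intro i j; simp [Fin.castSucc_inj]
  -- dot products with x
  have hxl : ∀ p : {p : Fin n × Fin n // p.1 < p.2},
      dot (AnmVec n m (.inl p)) x = X p.1.1 - X p.1.2 := by
    intro p
    have hne : (p.1.1).castSucc ≠ (p.1.2).castSucc := by
      rw [ne_eq, hcs_inj]; exact p.2.ne
    show dot (fun k => if k = p.1.1.castSucc then (1:ℝ)
      else if k = p.1.2.castSucc then -1 else 0) x = _
    rw [dot_two hne]
    simp only [hX_def]
    ring
  have hxr : ∀ i : Fin n, dot (AnmVec n m (.inr i)) x = y i := by
    intro i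
    show dot (fun k => if k = i.castSucc then (1:ℝ)
      else if k = Fin.last n then -s else 0) x = _
    rw [dot_two (hcs_ne i)]
    simp only [hy_def]
    ring
  -- nonvanishing
  have hXne : ∀ i j : Fin n, i ≠ j → X i - X j ≠ 0 := by
    intro i j hij
    rcases lt_or_gt_of_ne hij with h | h
    · have := hx (.inl ⟨(i, j), h⟩)
      rwa [hxl ⟨(i, j), h⟩] at this
    · have := hx (.inl ⟨(j, i), h⟩)
      rw [hxl ⟨(j, i), h⟩] at this
      intro hc; apply this; linarith [sub_eq_zero.mp hc]
  have hyne : ∀ i : Fin n, y i ≠ 0 := fun i => by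
    have := hx (.inr i); rwa [hxr i] at this
  -- dot products between vectors
  have hll : ∀ p q : {p : Fin n × Fin n // p.1 < p.2},
      dot (AnmVec n m (.inl p)) (AnmVec n m (.inl q)) =
        ((if p.1.1 = q.1.1 then (1:ℝ) else 0) - (if p.1.1 = q.1.2 then 1 else 0))
          - ((if p.1.2 = q.1.1 then (1:ℝ) else 0) - (if p.1.2 = q.1.2 then 1 else 0)) := by
    intro p q
    have hnep : (p.1.1).castSucc ≠ (p.1.2).castSucc := by
      rw [ne_eq, hcs_inj]; exact p.2.ne
    have hneq : (q.1.1).castSucc ≠ (q.1.2).castSucc := by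
      rw [ne_eq, hcs_inj]; exact q.2.ne
    show dot (fun k => if k = p.1.1.castSucc then (1:ℝ)
      else if k = p.1.2.castSucc then -1 else 0) _ = _
    rw [dot_two hnep]
    show (1:ℝ) * (if p.1.1.castSucc = q.1.1.castSucc then (1:ℝ)
        else if p.1.1.castSucc = q.1.2.castSucc then -1 else 0)
      + (-1) * (if p.1.2.castSucc = q.1.1.castSucc then (1:ℝ)
        else if p.1.2.castSucc = q.1.2.castSucc then -1 else 0) = _
    rw [two_ind hneq, two_ind hneq]
    simp only [Fin.castSucc_inj]
    ring
  have hlr : ∀ (p : {p : Fin n × Fin n // p.1 < p.2}) (i : Fin n),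
      dot (AnmVec n m (.inl p)) (AnmVec n m (.inr i)) =
        (if p.1.1 = i then (1:ℝ) else 0) - (if p.1.2 = i then 1 else 0) := by
    intro p i
    have hnep : (p.1.1).castSucc ≠ (p.1.2).castSucc := by
      rw [ne_eq, hcs_inj]; exact p.2.ne
    show dot (fun k => if k = p.1.1.castSucc then (1:ℝ)
      else if k = p.1.2.castSucc then -1 else 0) _ = _
    rw [dot_two hnep]
    show (1:ℝ) * (if p.1.1.castSucc = i.castSucc then (1:ℝ)
        else if p.1.1.castSucc = Fin.last n then -s else 0)
      + (-1) * (if p.1.2.castSucc = i.castSucc then (1:ℝ)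
        else if p.1.2.castSucc = Fin.last n then -s else 0) = _
    rw [one_ind (hcs_ne p.1.1), one_ind (hcs_ne p.1.2)]
    simp only [Fin.castSucc_inj]
    ring
  have hrl : ∀ (i : Fin n) (p : {p : Fin n × Fin n // p.1 < p.2}),
      dot (AnmVec n m (.inr i)) (AnmVec n m (.inl p)) =
        (if i = p.1.1 then (1:ℝ) else 0) - (if i = p.1.2 then 1 else 0) := by
    intro i p
    have hnep : (p.1.1).castSucc ≠ (p.1.2).castSucc := by
      rw [ne_eq, hcs_inj]; exact p.2.ne
    show dot (fun k => if k = i.castSucc then (1:ℝ)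
      else if k = Fin.last n then -s else 0) _ = _
    rw [dot_two (hcs_ne i)]
    show (1:ℝ) * (if i.castSucc = p.1.1.castSucc then (1:ℝ)
        else if i.castSucc = p.1.2.castSucc then -1 else 0)
      + (-s) * (if Fin.last n = p.1.1.castSucc then (1:ℝ)
        else if Fin.last n = p.1.2.castSucc then -1 else 0) = _
    rw [two_ind (by rw [ne_eq, hcs_inj]; exact p.2.ne) (i.castSucc),
      if_neg (Ne.symm (hcs_ne p.1.1)), if_neg (Ne.symm (hcs_ne p.1.2))]
    simp only [Fin.castSucc_inj]
    ring
  have hrr : ∀ i k : Fin n,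
      dot (AnmVec n m (.inr i)) (AnmVec n m (.inr k)) =
        (if i = k then (1:ℝ) else 0) + m := by
    intro i k
    show dot (fun j => if j = i.castSucc then (1:ℝ)
      else if j = Fin.last n then -s else 0) _ = _
    rw [dot_two (hcs_ne i)]
    show (1:ℝ) * (if i.castSucc = k.castSucc then (1:ℝ)
        else if i.castSucc = Fin.last n then -s else 0)
      + (-s) * (if Fin.last n = k.castSucc then (1:ℝ)
        else if Fin.last n = Fin.last n then -s else 0) = _
    rw [one_ind (hcs_ne i), if_neg (Ne.symm (hcs_ne k)), if_pos rfl]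
    simp only [Fin.castSucc_inj]
    rw [← hss]
    ring
  rw [Fintype.sum_sum_type]
  simp only [Fintype.sum_sum_type]
  simp only [AnmMult, hll, hlr, hrl, hrr, hxl, hxr, ne_eq, Sum.inl.injEq, Sum.inr.injEq,
    reduceCtorEq, not_false_eq_true, if_true, ite_true, Sum.inl.injEq]
  rw [Finset.sum_add_distrib, Finset.sum_add_distrib]
  set P := {p : Fin n × Fin n // p.1 < p.2}
  set S := ∑ p : P, m / (y p.1.1 * y p.1.2) with hS_def
  have hyd : ∀ p : P, X p.1.1 - X p.1.2 = y p.1.1 - y p.1.2 := by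
    intro p
    simp only [hX_def, hy_def]
    ring
  have key : ∀ p : P, m / ((X p.1.1 - X p.1.2) * y p.1.1)
      - m / ((X p.1.1 - X p.1.2) * y p.1.2) = -(m / (y p.1.1 * y p.1.2)) := by
    intro p
    have h0 : X p.1.1 - X p.1.2 ≠ 0 := hXne _ _ p.2.ne
    have h1 := hyne p.1.1
    have h2 := hyne p.1.2
    rw [hyd p] at h0 ⊢
    field_simp
    ring
  -- Block ll
  have Hll : (∑ p : P, ∑ q : P,
      if ¬p = q then
        m * m * (((if p.1.1 = q.1.1 then (1:ℝ) else 0) - if p.1.1 = q.1.2 then 1 else 0) -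
            ((if p.1.2 = q.1.1 then (1:ℝ) else 0) - if p.1.2 = q.1.2 then 1 else 0)) /
          ((X p.1.1 - X p.1.2) * (X q.1.1 - X q.1.2))
      else 0) = 0 := by
    have e : ∀ p q : P, (if ¬p = q then
        m * m * (((if p.1.1 = q.1.1 then (1:ℝ) else 0) - if p.1.1 = q.1.2 then 1 else 0) -
            ((if p.1.2 = q.1.1 then (1:ℝ) else 0) - if p.1.2 = q.1.2 then 1 else 0)) /
          ((X p.1.1 - X p.1.2) * (X q.1.1 - X q.1.2))
        else 0) = m * m * (if ¬p = q then
          (((if p.1.1 = q.1.1 then (1:ℝ) else 0) - if p.1.1 = q.1.2 then 1 else 0) -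
            ((if p.1.2 = q.1.1 then (1:ℝ) else 0) - if p.1.2 = q.1.2 then 1 else 0)) /
          ((X p.1.1 - X p.1.2) * (X q.1.1 - X q.1.2))
        else 0) := by
      intro p q
      by_cases h : p = q <;> simp [h] <;> ring
    simp_rw [e, ← Finset.mul_sum]
    have sll := Sll_zero X hXne
    simp only [ne_eq] at sll
    rw [sll, mul_zero]
  -- Block lr
  have Hlr : (∑ p : P, ∑ k : Fin n,
      m * 1 * ((if p.1.1 = k then (1:ℝ) else 0) - if p.1.2 = k then 1 else 0) /
        ((X p.1.1 - X p.1.2) * y k)) = -S := by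
    rw [hS_def, ← Finset.sum_neg_distrib]
    apply Finset.sum_congr rfl
    intro p _
    have e : ∀ k : Fin n, m * 1 * ((if p.1.1 = k then (1:ℝ) else 0) - if p.1.2 = k then 1 else 0) /
        ((X p.1.1 - X p.1.2) * y k)
        = (if p.1.1 = k then m / ((X p.1.1 - X p.1.2) * y k) else 0)
          - (if p.1.2 = k then m / ((X p.1.1 - X p.1.2) * y k) else 0) := by
      intro k
      by_cases h1 : p.1.1 = k <;> by_cases h2 : p.1.2 = k
      · exact absurd (h1.trans h2.symm) p.2.ne
      · simp [h1, h2]; try ring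
      · simp [h1, h2]; try ring
      · simp [h1, h2]
    simp_rw [e, Finset.sum_sub_distrib]
    rw [Finset.sum_ite_eq Finset.univ p.1.1 (fun k => m / ((X p.1.1 - X p.1.2) * y k)),
      Finset.sum_ite_eq Finset.univ p.1.2 (fun k => m / ((X p.1.1 - X p.1.2) * y k))]
    simp only [Finset.mem_univ, if_pos]
    exact key p
  -- Block rl
  have Hrl : (∑ k : Fin n, ∑ q : P,
      1 * m * ((if k = q.1.1 then (1:ℝ) else 0) - if k = q.1.2 then 1 else 0) /
        (y k * (X q.1.1 - X q.1.2))) = -S := by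
    rw [Finset.sum_comm, hS_def, ← Finset.sum_neg_distrib]
    apply Finset.sum_congr rfl
    intro q _
    have e : ∀ k : Fin n, 1 * m * ((if k = q.1.1 then (1:ℝ) else 0) - if k = q.1.2 then 1 else 0) /
        (y k * (X q.1.1 - X q.1.2))
        = (if k = q.1.1 then m / ((X q.1.1 - X q.1.2) * y k) else 0)
          - (if k = q.1.2 then m / ((X q.1.1 - X q.1.2) * y k) else 0) := by
      intro k
      by_cases h1 : k = q.1.1 <;> by_cases h2 : k = q.1.2
      · exact absurd (h1.symm.trans h2) q.2.ne
      · simp [h1, h2, q.2.ne, q.2.ne']; try ring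
      · simp [h1, h2, q.2.ne, q.2.ne']; try ring
      · simp [h1, h2]
    simp_rw [e, Finset.sum_sub_distrib]
    rw [Finset.sum_ite_eq' Finset.univ q.1.1 (fun k => m / ((X q.1.1 - X q.1.2) * y k)),
      Finset.sum_ite_eq' Finset.univ q.1.2 (fun k => m / ((X q.1.1 - X q.1.2) * y k))]
    simp only [Finset.mem_univ, if_pos]
    exact key q
  -- Block rr
  have Hrr : (∑ i : Fin n, ∑ k : Fin n,
      if ¬i = k then 1 * 1 * ((if i = k then (1:ℝ) else 0) + m) / (y i * y k) else 0)
      = 2 * S := by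
    have e : ∀ i k : Fin n, (if ¬i = k then
          1 * 1 * ((if i = k then (1:ℝ) else 0) + m) / (y i * y k) else 0)
        = (if i ≠ k then m / (y i * y k) else 0) := by
      intro i k
      by_cases h : i = k <;> simp [h]
    simp_rw [e]
    rw [sum_ne_eq_two_mul (fun i k => m / (y i * y k))
      (fun i j => by show m / (y i * y j) = m / (y j * y i); rw [mul_comm (y i) (y j)])]
  rw [Hll, Hlr, Hrl, Hrr]
  ring
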